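/- Let a, b, c be positive integers with a + b + c = n and gcd(a + b, b + c) = 1. Then the meander graph M(a, b, c | n) has exactly two vertices of degree 1, and every other vertex has degree 2. -/

import Mathlib

/-- Two (1-based) positions `u v` are joined by an arc determined by the
composition `L`: they lie in a common block of `L` and are reflections of each
other across the middle of that block. -/
def blockAdj (L : List ℕ) (u v : ℕ) : Prop :=
  ∃ k < L.length,
    (L.take k).sum < u ∧ u ≤ (L.take (k + 1)).sum ∧
    (L.take k).sum < v ∧ v ≤ (L.take (k + 1)).sum ∧
    u + v = (L.take k).sum + (L.take (k + 1)).sum + 1 ∧ u ≠ v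

/-- The meander graph `M(x | y)` on vertices `{1, …, n}` (represented by
`Fin n`, vertex `i` corresponding to the number `i + 1`): top edges come from
the blocks of `x`, bottom edges from the blocks of `y`. -/
def meander (x y : List ℕ) (n : ℕ) : SimpleGraph (Fin n) where
  Adj i j := blockAdj x ((i : ℕ) + 1) ((j : ℕ) + 1) ∨ blockAdj y ((i : ℕ) + 1) ((j : ℕ) + 1)
  symm := ⟨by
    rintro i j (⟨k, hk, h1, h2, h3, h4, h5, h6⟩ | ⟨k, hk, h1, h2, h3, h4, h5, h6⟩)
    · exact Or.inl ⟨k, hk, h3, h4, h1, h2, by omega, by omega⟩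
    · exact Or.inr ⟨k, hk, h3, h4, h1, h2, by omega, by omega⟩⟩
  loopless := ⟨by
    rintro i (⟨k, hk, h1, h2, h3, h4, h5, h6⟩ | ⟨k, hk, h1, h2, h3, h4, h5, h6⟩) <;> omega⟩

/-- A graph on `Fin n` consists of a single path when it is isomorphic to the
path graph on `n` vertices. -/
def IsSinglePath {n : ℕ} (G : SimpleGraph (Fin n)) : Prop :=
  Nonempty (G ≃g SimpleGraph.pathGraph n)

lemma blockAdj_single (m u w : ℕ) :
    blockAdj [m] u w ↔ 0 < u ∧ u ≤ m ∧ 0 < w ∧ w ≤ m ∧ u + w = m + 1 ∧ u ≠ w := by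
  constructor
  · rintro ⟨k, hk, h⟩
    simp only [List.length_singleton] at hk
    interval_cases k <;> simp_all
  · rintro h
    exact ⟨0, by simp, by simpa using h⟩

lemma blockAdj_three (a b c u w : ℕ) : blockAdj [a,b,c] u w ↔
    (0 < u ∧ u ≤ a ∧ 0 < w ∧ w ≤ a ∧ u + w = a + 1 ∧ u ≠ w) ∨
    (a < u ∧ u ≤ a+b ∧ a < w ∧ w ≤ a+b ∧ u + w = 2*a+b+1 ∧ u ≠ w) ∨
    (a+b < u ∧ u ≤ a+b+c ∧ a+b < w ∧ w ≤ a+b+c ∧ u + w = 2*a+2*b+c+1 ∧ u ≠ w) := by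
  constructor
  · rintro ⟨k, hk, h⟩
    simp only [List.length_cons, List.length_nil] at hk
    interval_cases k <;> simp_all <;> omega
  · rintro (h|h|h)
    exacts [⟨0, by simp, by simp; omega⟩, ⟨1, by simp, by simp; omega⟩, ⟨2, by simp, by simp; omega⟩]

lemma meander_adj (x y : List ℕ) (n : ℕ) (i j : Fin n) :
    (meander x y n).Adj i j ↔ blockAdj x ((i:ℕ)+1) ((j:ℕ)+1) ∨ blockAdj y ((i:ℕ)+1) ((j:ℕ)+1) :=
  Iff.rfl

lemma meander_deg (a b c n : ℕ) (ha : 0 < a) (hb : 0 < b) (hc : 0 < c)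
    (habc : a + b + c = n) (hac : 2*a + b ≠ n) (v : Fin n) :
    ((meander [a,b,c] [n] n).neighborSet v).ncard =
      if 2*((v:ℕ)+1) = a+1 ∨ 2*((v:ℕ)+1) = 2*a+b+1 ∨ 2*((v:ℕ)+1) = 2*a+2*b+c+1 ∨
         2*((v:ℕ)+1) = n+1
      then 1 else 2 := by
  have hv : (v:ℕ) < n := v.isLt
  by_cases h1 : (v:ℕ) + 1 ≤ a
  · by_cases hf : 2*((v:ℕ)+1) = a + 1
    · have hs : (meander [a,b,c] [n] n).neighborSet v = {(⟨n - ((v:ℕ)+1), by omega⟩ : Fin n)} := by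
        ext w
        simp only [SimpleGraph.mem_neighborSet, meander_adj, blockAdj_three, blockAdj_single,
          Set.mem_singleton_iff, Fin.ext_iff]
        omega
      rw [hs, Set.ncard_singleton, if_pos (Or.inl hf)]
    · by_cases hg2 : 2*((v:ℕ)+1) = n + 1
      · have hs : (meander [a,b,c] [n] n).neighborSet v = {(⟨a - ((v:ℕ)+1), by omega⟩ : Fin n)} := by
          ext w
          simp only [SimpleGraph.mem_neighborSet, meander_adj, blockAdj_three, blockAdj_single,
            Set.mem_singleton_iff, Fin.ext_iff]
          omega
        rw [hs, Set.ncard_singleton, if_pos (Or.inr (Or.inr (Or.inr hg2)))]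
      · have hs : (meander [a,b,c] [n] n).neighborSet v =
            {(⟨a - ((v:ℕ)+1), by omega⟩ : Fin n), (⟨n - ((v:ℕ)+1), by omega⟩ : Fin n)} := by
          ext w
          simp only [SimpleGraph.mem_neighborSet, meander_adj, blockAdj_three, blockAdj_single,
            Set.mem_insert_iff, Set.mem_singleton_iff, Fin.ext_iff]
          omega
        rw [hs, Set.ncard_pair (by simp [Fin.ext_iff]; omega), if_neg (by omega)]
  · by_cases h2 : (v:ℕ) + 1 ≤ a + b
    · by_cases hf : 2*((v:ℕ)+1) = 2*a + b + 1
      · have hs : (meander [a,b,c] [n] n).neighborSet v = {(⟨n - ((v:ℕ)+1), by omega⟩ : Fin n)} := by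
          ext w
          simp only [SimpleGraph.mem_neighborSet, meander_adj, blockAdj_three, blockAdj_single,
            Set.mem_singleton_iff, Fin.ext_iff]
          omega
        rw [hs, Set.ncard_singleton, if_pos (Or.inr (Or.inl hf))]
      · by_cases hg2 : 2*((v:ℕ)+1) = n + 1
        · have hs : (meander [a,b,c] [n] n).neighborSet v =
              {(⟨2*a + b - ((v:ℕ)+1), by omega⟩ : Fin n)} := by
            ext w
            simp only [SimpleGraph.mem_neighborSet, meander_adj, blockAdj_three, blockAdj_single,
              Set.mem_singleton_iff, Fin.ext_iff]
            omega
          rw [hs, Set.ncard_singleton, if_pos (Or.inr (Or.inr (Or.inr hg2)))]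
        · have hs : (meander [a,b,c] [n] n).neighborSet v =
              {(⟨2*a + b - ((v:ℕ)+1), by omega⟩ : Fin n), (⟨n - ((v:ℕ)+1), by omega⟩ : Fin n)} := by
            ext w
            simp only [SimpleGraph.mem_neighborSet, meander_adj, blockAdj_three, blockAdj_single,
              Set.mem_insert_iff, Set.mem_singleton_iff, Fin.ext_iff]
            omega
          rw [hs, Set.ncard_pair (by simp [Fin.ext_iff]; omega), if_neg (by omega)]
    · by_cases hf : 2*((v:ℕ)+1) = 2*a + 2*b + c + 1
      · have hs : (meander [a,b,c] [n] n).neighborSet v = {(⟨n - ((v:ℕ)+1), by omega⟩ : Fin n)} := by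
          ext w
          simp only [SimpleGraph.mem_neighborSet, meander_adj, blockAdj_three, blockAdj_single,
            Set.mem_singleton_iff, Fin.ext_iff]
          omega
        rw [hs, Set.ncard_singleton, if_pos (Or.inr (Or.inr (Or.inl hf)))]
      · by_cases hg2 : 2*((v:ℕ)+1) = n + 1
        · have hs : (meander [a,b,c] [n] n).neighborSet v =
              {(⟨2*a + 2*b + c - ((v:ℕ)+1), by omega⟩ : Fin n)} := by
            ext w
            simp only [SimpleGraph.mem_neighborSet, meander_adj, blockAdj_three, blockAdj_single,
              Set.mem_singleton_iff, Fin.ext_iff]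
            omega
          rw [hs, Set.ncard_singleton, if_pos (Or.inr (Or.inr (Or.inr hg2)))]
        · have hs : (meander [a,b,c] [n] n).neighborSet v =
              {(⟨2*a + 2*b + c - ((v:ℕ)+1), by omega⟩ : Fin n), (⟨n - ((v:ℕ)+1), by omega⟩ : Fin n)} := by
            ext w
            simp only [SimpleGraph.mem_neighborSet, meander_adj, blockAdj_three, blockAdj_single,
              Set.mem_insert_iff, Set.mem_singleton_iff, Fin.ext_iff]
            omega
          rw [hs, Set.ncard_pair (by simp [Fin.ext_iff]; omega), if_neg (by omega)]

/-- If `a + b + c = n` with `gcd(a + b, b + c) = 1`, then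
the meander graph `M(a, b, c | n)` has exactly two vertices of degree `1` and
every other vertex has degree `2`. -/
theorem meander_submaximal_parabolic_two_degree_one_vertices
    (a b c n : ℕ) (ha : 0 < a) (hb : 0 < b) (hc : 0 < c) (habc : a + b + c = n)
    (hg : Nat.gcd (a + b) (b + c) = 1) :
    { v : Fin n | ((meander [a, b, c] [n] n).neighborSet v).ncard = 1 }.ncard = 2 ∧
    ∀ v : Fin n, ((meander [a, b, c] [n] n).neighborSet v).ncard ≠ 1 →
      ((meander [a, b, c] [n] n).neighborSet v).ncard = 2 := by
  have hac : 2*a + b ≠ n := by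
    intro h
    have hcc : c = a := by omega
    rw [hcc, Nat.add_comm b a, Nat.add_comm a b, Nat.gcd_self] at hg
    omega
  have key := meander_deg a b c n ha hb hc habc hac
  have hpar : (a+b) % 2 = 1 ∨ (b+c) % 2 = 1 := by
    by_contra h
    push_neg at h
    have : 2 ∣ Nat.gcd (a+b) (b+c) := Nat.dvd_gcd (by omega) (by omega)
    rw [hg] at this
    omega
  constructor
  · have hS : { v : Fin n | ((meander [a, b, c] [n] n).neighborSet v).ncard = 1 } =
        { v : Fin n | 2*((v:ℕ)+1) = a+1 ∨ 2*((v:ℕ)+1) = 2*a+b+1 ∨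
          2*((v:ℕ)+1) = 2*a+2*b+c+1 ∨ 2*((v:ℕ)+1) = n+1 } := by
      ext v
      rw [Set.mem_setOf_eq, Set.mem_setOf_eq, key v]
      split_ifs with h <;> simp [h]
    rw [hS, Set.ncard_eq_two]
    rcases Nat.mod_two_eq_zero_or_one a with haa | haa <;>
      rcases Nat.mod_two_eq_zero_or_one b with hbb | hbb <;>
      rcases Nat.mod_two_eq_zero_or_one c with hcc | hcc
    · omega
    · exact ⟨⟨(2*a+2*b+c+1)/2 - 1, by omega⟩, ⟨(n+1)/2 - 1, by omega⟩,
        by simp only [ne_eq, Fin.mk.injEq]; omega,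
        by ext ⟨v, hv⟩
           simp only [Set.mem_setOf_eq, Set.mem_insert_iff, Set.mem_singleton_iff, Fin.mk.injEq]
           omega⟩
    · exact ⟨⟨(2*a+b+1)/2 - 1, by omega⟩, ⟨(n+1)/2 - 1, by omega⟩,
        by simp only [ne_eq, Fin.mk.injEq]; omega,
        by ext ⟨v, hv⟩
           simp only [Set.mem_setOf_eq, Set.mem_insert_iff, Set.mem_singleton_iff, Fin.mk.injEq]
           omega⟩
    · exact ⟨⟨(2*a+b+1)/2 - 1, by omega⟩, ⟨(2*a+2*b+c+1)/2 - 1, by omega⟩,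
        by simp only [ne_eq, Fin.mk.injEq]; omega,
        by ext ⟨v, hv⟩
           simp only [Set.mem_setOf_eq, Set.mem_insert_iff, Set.mem_singleton_iff, Fin.mk.injEq]
           omega⟩
    · exact ⟨⟨(a+1)/2 - 1, by omega⟩, ⟨(n+1)/2 - 1, by omega⟩,
        by simp only [ne_eq, Fin.mk.injEq]; omega,
        by ext ⟨v, hv⟩
           simp only [Set.mem_setOf_eq, Set.mem_insert_iff, Set.mem_singleton_iff, Fin.mk.injEq]
           omega⟩
    · exact ⟨⟨(a+1)/2 - 1, by omega⟩, ⟨(2*a+2*b+c+1)/2 - 1, by omega⟩,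
        by simp only [ne_eq, Fin.mk.injEq]; omega,
        by ext ⟨v, hv⟩
           simp only [Set.mem_setOf_eq, Set.mem_insert_iff, Set.mem_singleton_iff, Fin.mk.injEq]
           omega⟩
    · exact ⟨⟨(a+1)/2 - 1, by omega⟩, ⟨(2*a+b+1)/2 - 1, by omega⟩,
        by simp only [ne_eq, Fin.mk.injEq]; omega,
        by ext ⟨v, hv⟩
           simp only [Set.mem_setOf_eq, Set.mem_insert_iff, Set.mem_singleton_iff, Fin.mk.injEq]
           omega⟩
    · omega
  · intro v h
    rw [key v] at h ⊢
    split_ifs at h ⊢ with hh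
    · exact absurd rfl h
    · rfl
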